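/- Let κ be a connectivity function on a finite set U and let X, Y ⊆ U be disjoint nonempty sets. Then among all (X,Y)-separations of minimum order there is a unique one, Z, such that Z ⊆ Z' for every minimum-order (X,Y)-separation Z' (the leftmost minimum (X,Y)-separation). -/

import Mathlib

/-- `κ` is symmetric. -/
def SymmetricFn {α : Type*} (κ : Set α → ℕ) : Prop := ∀ X : Set α, κ Xᶜ = κ X

/-- `κ` is submodular. -/
def Submodular {α : Type*} (κ : Set α → ℕ) : Prop :=
  ∀ X Y : Set α, κ (X ∩ Y) + κ (X ∪ Y) ≤ κ X + κ Y

/-- A connectivity function: symmetric, submodular, and zero on the empty set. -/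
def ConnFn {α : Type*} (κ : Set α → ℕ) : Prop :=
  SymmetricFn κ ∧ Submodular κ ∧ κ ∅ = 0

/-- An (X,Y)-separation: a set Z with X ⊆ Z ⊆ Yᶜ. -/
def IsSep {α : Type*} (X Y Z : Set α) : Prop := X ⊆ Z ∧ Z ⊆ Yᶜ

/-- A minimum-order (X,Y)-separation. -/
def IsMinSep {α : Type*} (κ : Set α → ℕ) (X Y Z : Set α) : Prop :=
  IsSep X Y Z ∧ ∀ Z' : Set α, IsSep X Y Z' → κ Z ≤ κ Z'

theorem inter_min_sep {α : Type*} (κ : Set α → ℕ) (hsub : Submodular κ)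
    (X Y Z Z' : Set α) (hZ : IsMinSep κ X Y Z) (hZ' : IsMinSep κ X Y Z') :
    IsMinSep κ X Y (Z ∩ Z') := by
  obtain ⟨⟨h1, h2⟩, hm⟩ := hZ
  obtain ⟨⟨h1', h2'⟩, hm'⟩ := hZ'
  have hint : IsSep X Y (Z ∩ Z') := ⟨Set.subset_inter h1 h1', (Set.inter_subset_left).trans h2⟩
  have huni : IsSep X Y (Z ∪ Z') := ⟨h1.trans Set.subset_union_left, Set.union_subset h2 h2'⟩
  refine ⟨hint, fun W hW => ?_⟩
  have e1 : κ Z ≤ κ W := hm W hW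
  have e2 : κ Z' = κ Z := le_antisymm (hm' Z ⟨h1, h2⟩) (hm Z' ⟨h1', h2'⟩)
  have e3 : κ Z ≤ κ (Z ∪ Z') := hm _ huni
  have := hsub Z Z'
  omega

/-- There is a unique leftmost minimum (X,Y)-separation. -/
theorem exists_unique_leftmost_min_sep {U : Type*} [Fintype U] (κ : Set U → ℕ)
    (hκ : ConnFn κ) (X Y : Set U) (hd : Disjoint X Y)
    (hX : X.Nonempty) (hY : Y.Nonempty) :
    ∃! Z : Set U, IsMinSep κ X Y Z ∧ ∀ Z' : Set U, IsMinSep κ X Y Z' → Z ⊆ Z' := by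
  obtain ⟨-, hsub, -⟩ := hκ
  -- X itself is a separation
  have hXsep : IsSep X Y X := ⟨subset_rfl, hd.subset_compl_right⟩
  -- existence of a minimum separation
  have hex : ∃ Z, IsMinSep κ X Y Z := by
    have hne : {n | ∃ Z, IsSep X Y Z ∧ κ Z = n}.Nonempty := ⟨κ X, X, hXsep, rfl⟩
    obtain ⟨Z, hZ, hZn⟩ := Nat.sInf_mem hne
    exact ⟨Z, hZ, fun Z' hZ' => hZn ▸ Nat.sInf_le ⟨Z', hZ', rfl⟩⟩
  -- take a minimal (wrt ⊆) minimum separation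
  obtain ⟨Z, hZ⟩ := hex
  obtain ⟨Z₀, hZ₀, hmin⟩ := Set.Finite.exists_minimalFor id {Z | IsMinSep κ X Y Z}
    (Set.toFinite _) ⟨Z, hZ⟩
  have hleft : ∀ Z' : Set U, IsMinSep κ X Y Z' → Z₀ ⊆ Z' := by
    intro Z' hZ'
    have hint := inter_min_sep κ hsub X Y Z₀ Z' hZ₀ hZ'
    have := hmin hint Set.inter_subset_left
    simp only [id] at this
    exact fun a ha => (this ha).2
  refine ⟨Z₀, ⟨hZ₀, hleft⟩, fun W ⟨hW, hWleft⟩ =>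
    Set.Subset.antisymm (hWleft Z₀ hZ₀) (hleft W hW)⟩
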